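/- Let i, j, k be natural numbers, and let α_{i,j,k} denote the number of ordered pairs (I, J) of subsets of a fixed k-element set with |I| = i, |J| = j and I ∪ J equal to the whole set. Then α_{i,j,k} is odd if and only if k = i OR j, where i OR j denotes the bitwise or of i and j. In particular, for fixed i and j there is exactly one k for which α_{i,j,k} is odd. -/

import Mathlib

lemma my_lor_div_two (a b : ℕ) : (a ||| b) / 2 = a / 2 ||| b / 2 :=
  Nat.eq_of_testBit_eq (by simp [Nat.testBit_div_two, Nat.testBit_or])

lemma my_land_div_two (a b : ℕ) : (a &&& b) / 2 = a / 2 &&& b / 2 :=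
  Nat.eq_of_testBit_eq (by simp [Nat.testBit_div_two, Nat.testBit_and])

lemma my_lor_add_land (a b : ℕ) : (a ||| b) + (a &&& b) = a + b := by
  induction a using Nat.strong_induction_on generalizing b with
  | _ a ih =>
    rcases Nat.eq_zero_or_pos a with rfl | ha
    · simp
    have e1 : a ||| b = 2 * (a / 2 ||| b / 2) + (a ||| b) % 2 := by
      rw [← my_lor_div_two]; omega
    have e2 : a &&& b = 2 * (a / 2 &&& b / 2) + (a &&& b) % 2 := by
      rw [← my_land_div_two]; omega
    have h1 : (a ||| b) % 2 = 1 ↔ (a % 2 = 1 ∨ b % 2 = 1) := Nat.or_mod_two_eq_one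
    have h2 : (a &&& b) % 2 = 1 ↔ (a % 2 = 1 ∧ b % 2 = 1) := Nat.and_mod_two_eq_one
    have hIH := ih (a / 2) (by omega) (b / 2)
    omega

lemma my_le_lor (a b : ℕ) : a ≤ a ||| b := by
  have := my_lor_add_land a b
  have : a &&& b ≤ b := Nat.and_le_right
  omega

-- submask lemmas
lemma my_or_eq_iff_and_eq (a b : ℕ) : a ||| b = b ↔ a &&& b = a := by
  have h := my_lor_add_land a b
  have h1 : a ≤ a ||| b := my_le_lor a b
  have h2 : a &&& b ≤ a := Nat.and_le_left
  omega

lemma my_lor_mod_two (a b : ℕ) : (a ||| b) % 2 = a % 2 ||| b % 2 := by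
  have h1 : (a ||| b) % 2 = 1 ↔ (a % 2 = 1 ∨ b % 2 = 1) := Nat.or_mod_two_eq_one
  rcases Nat.mod_two_eq_zero_or_one a with h | h <;>
    rcases Nat.mod_two_eq_zero_or_one b with h' | h' <;> rw [h, h'] <;>
    simp only [Nat.zero_or, Nat.or_zero, Nat.or_self] <;> omega

lemma my_odd_choose (n k : ℕ) : Odd (n.choose k) ↔ k ||| n = n := by
  induction n using Nat.strong_induction_on generalizing k with
  | _ n ih =>
    rcases Nat.eq_zero_or_pos n with rfl | hn
    · cases k <;> simp [Nat.choose]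
    have : Fact (Nat.Prime 2) := ⟨Nat.prime_two⟩
    have lucas : n.choose k % 2 =
        ((n % 2).choose (k % 2) * (n / 2).choose (k / 2)) % 2 :=
      Choose.choose_modEq_choose_mod_mul_choose_div_nat
    have h1 : Odd (n.choose k) ↔
        Odd ((n % 2).choose (k % 2)) ∧ Odd ((n / 2).choose (k / 2)) := by
      rw [Nat.odd_iff, lucas, ← Nat.odd_iff, Nat.odd_mul]
    have h2 : Odd ((n % 2).choose (k % 2)) ↔ k % 2 ||| n % 2 = n % 2 := by
      rcases Nat.mod_two_eq_zero_or_one n with h | h <;>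
        rcases Nat.mod_two_eq_zero_or_one k with h' | h' <;> rw [h, h'] <;> decide
    have h3 := ih (n / 2) (by omega) (k / 2)
    rw [h1, h2, h3]
    constructor
    · rintro ⟨ha, hb⟩
      have := my_lor_div_two k n
      have := my_lor_mod_two k n
      omega
    · intro h
      constructor
      · rw [← my_lor_mod_two, h]
      · rw [← my_lor_div_two, h]

lemma my_arith (i j k : ℕ) :
    ((i ||| k = k) ∧ k - i ≤ j ∧ ((j - (k - i)) ||| i = i)) ↔ k = i ||| j := by
  constructor
  · rintro ⟨h1, h2, h3⟩
    have hik : i ≤ k := h1 ▸ my_le_lor i k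
    have hand : i &&& k = i := (my_or_eq_iff_and_eq i k).1 h1
    have hb : ∀ s, (i.testBit s && k.testBit s) = i.testBit s := fun s => by
      rw [← Nat.testBit_and, hand]
    have hx0 : i &&& (k ^^^ i) = 0 := Nat.eq_of_testBit_eq fun s => by
      have := hb s
      cases hi : i.testBit s <;> cases hk : k.testBit s <;>
        simp_all [Nat.testBit_and, Nat.testBit_xor]
    have hx1 : i ||| (k ^^^ i) = k := Nat.eq_of_testBit_eq fun s => by
      have := hb s
      cases hi : i.testBit s <;> cases hk : k.testBit s <;>
        simp_all [Nat.testBit_or, Nat.testBit_xor]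
    have hxk : i + (k ^^^ i) = k := by
      have := my_lor_add_land i (k ^^^ i)
      rw [hx0, hx1] at this; omega
    have ha : k - i = k ^^^ i := by omega
    rw [ha] at h3 h2
    set m := j - (k ^^^ i) with hm
    have hj : j = (k ^^^ i) + m := by omega
    have hmi : m &&& i = m := (my_or_eq_iff_and_eq m i).1 h3
    have hma : (k ^^^ i) &&& m = 0 := by
      calc (k ^^^ i) &&& m = (k ^^^ i) &&& (m &&& i) := by rw [hmi]
        _ = m &&& ((k ^^^ i) &&& i) := by
            rw [← Nat.land_assoc, Nat.land_comm (k ^^^ i) m, Nat.land_assoc]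
        _ = 0 := by rw [Nat.land_comm (k ^^^ i) i, hx0, Nat.and_zero]
    have hjor : j = (k ^^^ i) ||| m := by
      have := my_lor_add_land (k ^^^ i) m
      rw [hma] at this; omega
    have hmk : m ||| k = k := by
      apply (my_or_eq_iff_and_eq m k).2
      calc m &&& k = (m &&& i) &&& k := by rw [hmi]
        _ = m &&& (i &&& k) := Nat.land_assoc _ _ _
        _ = m := by rw [hand, hmi]
    rw [hjor, ← Nat.lor_assoc, hx1, Nat.lor_comm]
    exact hmk.symm
  · rintro rfl
    have hid := my_lor_add_land i j
    have hik : i ≤ i ||| j := my_le_lor i j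
    have hand : i &&& j ≤ i := Nat.and_le_left
    refine ⟨?_, by omega, ?_⟩
    · rw [← Nat.lor_assoc, Nat.or_self]
    · have hm : j - ((i ||| j) - i) = i &&& j := by omega
      rw [hm]
      apply (my_or_eq_iff_and_eq _ _).2
      rw [Nat.land_assoc, Nat.land_comm j i, ← Nat.land_assoc, Nat.and_self]

open Finset

lemma my_inner {k : ℕ} (I : Finset (Fin k)) (j : ℕ) :
    (univ.filter (fun J : Finset (Fin k) => J.card = j ∧ I ∪ J = univ)).card =
      if k - I.card ≤ j then I.card.choose (j - (k - I.card)) else 0 := by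
  have hIc : Iᶜ.card = k - I.card := by simp [Finset.card_compl]
  by_cases hle : k - I.card ≤ j
  · rw [if_pos hle]
    have hset : univ.filter (fun J : Finset (Fin k) => J.card = j ∧ I ∪ J = univ) =
        (Finset.powersetCard (j - (k - I.card)) I).image (· ∪ Iᶜ) := by
      ext J
      simp only [mem_filter, mem_univ, true_and, mem_image, Finset.mem_powersetCard]
      constructor
      · rintro ⟨hcard, hcover⟩
        have hsub : Iᶜ ⊆ J := by
          intro x hx
          have hxu : x ∈ I ∪ J := hcover ▸ mem_univ x
          simp only [Finset.mem_compl] at hx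
          simp only [Finset.mem_union] at hxu
          tauto
        have hJ : (J ∩ I) ∪ Iᶜ = J := by
          ext x
          simp only [Finset.mem_union, Finset.mem_inter, Finset.mem_compl]
          by_cases hxI : x ∈ I
          · constructor
            · rintro (⟨h, _⟩ | h) <;> [exact h; exact absurd hxI h]
            · intro h; exact Or.inl ⟨h, hxI⟩
          · constructor
            · rintro (⟨h, _⟩ | _) <;> [exact h; exact hsub (by simpa using hxI)]
            · intro _; exact Or.inr hxI
        have hdis : Disjoint (J ∩ I) Iᶜ :=
          disjoint_compl_right.mono_left Finset.inter_subset_right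
        have hcardJ : (J ∩ I).card + Iᶜ.card = J.card := by
          rw [← Finset.card_union_of_disjoint hdis, hJ]
        refine ⟨J ∩ I, ⟨Finset.inter_subset_right, by omega⟩, hJ⟩
      · rintro ⟨T, ⟨hTI, hTcard⟩, rfl⟩
        have hdis : Disjoint T Iᶜ := disjoint_compl_right.mono_left hTI
        constructor
        · rw [Finset.card_union_of_disjoint hdis, hTcard, hIc]; omega
        · ext x
          simp only [Finset.mem_union, Finset.mem_compl, mem_univ, iff_true]
          tauto
    rw [hset, Finset.card_image_of_injOn, Finset.card_powersetCard]
    intro T hT T' hT' h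
    simp only [Finset.mem_coe, Finset.mem_powersetCard] at hT hT'
    have e : ∀ S : Finset (Fin k), S ⊆ I → (S ∪ Iᶜ) ∩ I = S := by
      intro S hS
      ext x
      simp only [Finset.mem_inter, Finset.mem_union, Finset.mem_compl]
      constructor
      · rintro ⟨h' | h', hI⟩ <;> [exact h'; exact absurd hI h']
      · intro hx; exact ⟨Or.inl hx, hS hx⟩
    have h' : T ∪ Iᶜ = T' ∪ Iᶜ := h
    calc T = (T ∪ Iᶜ) ∩ I := (e T hT.1).symm
      _ = (T' ∪ Iᶜ) ∩ I := by rw [h']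
      _ = T' := e T' hT'.1
  · rw [if_neg hle, Finset.card_eq_zero, Finset.eq_empty_iff_forall_notMem]
    rintro J hJ
    simp only [mem_filter, mem_univ, true_and] at hJ
    obtain ⟨hcard, hcover⟩ := hJ
    have hsub : Iᶜ ⊆ J := by
      intro x hx
      have hxu : x ∈ I ∪ J := hcover ▸ mem_univ x
      simp only [Finset.mem_compl] at hx
      simp only [Finset.mem_union] at hxu
      tauto
    have := Finset.card_le_card hsub
    omega

lemma my_card (i j k : ℕ) :
    (Finset.univ.filter (fun p : Finset (Fin k) × Finset (Fin k) =>
        p.1.card = i ∧ p.2.card = j ∧ p.1 ∪ p.2 = Finset.univ)).card =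
    k.choose i * (if k - i ≤ j then i.choose (j - (k - i)) else 0) := by
  classical
  set P := fun p : Finset (Fin k) × Finset (Fin k) =>
    p.1.card = i ∧ p.2.card = j ∧ p.1 ∪ p.2 = Finset.univ with hP
  rw [Finset.card_eq_sum_card_fiberwise
    (f := Prod.fst) (t := Finset.univ) (fun x _ => Finset.mem_univ _)]
  have fib : ∀ I : Finset (Fin k),
      ((univ.filter P).filter fun p => p.1 = I).card =
        if I.card = i then
          (if k - i ≤ j then i.choose (j - (k - i)) else 0) else 0 := by
    intro I
    by_cases hI : I.card = i
    · rw [if_pos hI]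
      have : ((univ.filter P).filter fun p => p.1 = I) =
          (univ.filter fun J : Finset (Fin k) => J.card = j ∧ I ∪ J = univ).map
            ⟨fun J => (I, J), fun a b h => by simpa using h⟩ := by
        ext p
        simp only [Finset.mem_filter, Finset.mem_univ, true_and, Finset.mem_map,
          Function.Embedding.coeFn_mk, hP]
        constructor
        · rintro ⟨⟨h1, h2, h3⟩, rfl⟩
          exact ⟨p.2, ⟨h2, h3⟩, rfl⟩
        · rintro ⟨J, ⟨h2, h3⟩, rfl⟩
          exact ⟨⟨hI, h2, h3⟩, rfl⟩
      rw [this, Finset.card_map, my_inner, hI]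
    · rw [if_neg hI]
      rw [Finset.card_eq_zero, Finset.eq_empty_iff_forall_notMem]
      rintro p hp
      simp only [Finset.mem_filter, hP] at hp
      exact hI (hp.2 ▸ hp.1.2.1)
  simp only [hP] at fib
  simp only [fib]
  rw [← Finset.sum_filter]
  rw [Finset.sum_const, smul_eq_mul]
  congr 1
  have := Finset.univ_filter_card_eq (Fin k) i

  rw [this, Finset.card_powersetCard, Finset.card_univ, Fintype.card_fin]

/-- Let `α i j k` be the number of ordered pairs `(I, J)` of subsets of a `k`-element set with
`|I| = i`, `|J| = j` and `I ∪ J` the whole set.  Then `α i j k` is odd if and only if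
`k = i ||| j` (bitwise or).  In particular, for fixed `i` and `j` there is exactly one `k`
for which `α i j k` is odd. -/
theorem stmt_6 (i j k : ℕ) :
    Odd (Finset.univ.filter (fun p : Finset (Fin k) × Finset (Fin k) =>
        p.1.card = i ∧ p.2.card = j ∧ p.1 ∪ p.2 = Finset.univ)).card ↔
      k = i ||| j := by
  rw [my_card, Nat.odd_mul, my_odd_choose]
  have h2 : Odd (if k - i ≤ j then i.choose (j - (k - i)) else 0) ↔
      (k - i ≤ j ∧ (j - (k - i)) ||| i = i) := by
    split_ifs with h
    · rw [my_odd_choose]; simp [h]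
    · simp [h]
  rw [h2, ← and_assoc]
  rw [and_assoc]
  exact my_arith i j k
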